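/- Let β be a Pisot number with finite Rényi expansion d_β(1) = t₁⋯t_ℓ and α a conjugate of β. If x ∈ (0,1) has a finite β-expansion 0•x₋₁⋯x₋ₚ, then the conjugate -x' has an eventually periodic α-adic representation over Z of the form ^ω(t₁⋯t_{ℓ-1}(t_ℓ-1)) u_n⋯u_0 • u_{-1}⋯u_{-m}, i.e., -x' = P·α^{N}/(1-α^{ℓ}) + Σ_{i=-m}^{n} u_i α^i where P = Σ_{j=1}^{ℓ} t'_j α^{ℓ-j} with t'_ℓ = t_ℓ - 1, for suitable integers N, n, m and integer digits u_i. Equivalently, -x' differs from the α-value of ^ω(t₁⋯t_{ℓ-1}(t_ℓ-1))·α^{N} by an element of Z[α, α^{-1}]. -/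

import Mathlib

/-- The β-transformation T_β(x) = {βx}. -/
noncomputable def betaMap (β : ℝ) : ℝ → ℝ := fun x => Int.fract (β * x)

/-- The Rényi expansion of 1: renyi β n = t_{n+1} = ⌊β·T_β^n(1)⌋. -/
noncomputable def renyi (β : ℝ) (n : ℕ) : ℤ := ⌊β * (betaMap β)^[n] 1⌋

/-- β is a Pisot number. -/
def IsPisot (β : ℝ) : Prop :=
  1 < β ∧ IsIntegral ℤ β ∧
    ∀ z : ℂ, Polynomial.aeval z (minpoly ℤ β) = 0 → z ≠ (β : ℂ) → ‖z‖ < 1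

/-- The digits of the purely periodic left-infinite word ^ω(t₁⋯t_{ℓ-1}(t_ℓ-1)),
position 0 carrying the rightmost letter of the period. -/
noncomputable def periodDigit (β : ℝ) (ℓ : ℕ) (n : ℕ) : ℤ :=
  renyi β (ℓ - 1 - n % ℓ) - if n % ℓ = 0 then 1 else 0

open Finset Polynomial in
/-- Let β be a Pisot number with finite Rényi expansion
d_β(1) = t₁⋯t_ℓ and α a conjugate of β.  If x ∈ (0,1) has a finite β-expansion
0•x₋₁⋯x₋ₚ (greedy digits d with d n = 0 for n ≥ p), then the conjugate
-x' = -Σ_{i=1}^p d_{i-1} α^{-i} has an eventually periodic α-adic representation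
over ℤ of the form ^ω(t₁⋯t_{ℓ-1}(t_ℓ-1)) u_n⋯u₀ • u₋₁⋯u₋ₘ; equivalently, -x'
differs from α^N times the α-value of ^ω(t₁⋯t_{ℓ-1}(t_ℓ-1)) by an element of
ℤ[α, α⁻¹]. -/
theorem finite_expansion_conjugate_eventually_periodic (β : ℝ) (α : ℂ)
    (hβ : IsPisot β)
    (hroot : Polynomial.aeval α (minpoly ℤ β) = 0) (hne : α ≠ (β : ℂ))
    (ℓ : ℕ) (hℓ : 0 < ℓ)
    (hlast : renyi β (ℓ - 1) ≠ 0) (hfin : ∀ n, ℓ ≤ n → renyi β n = 0)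
    (x : ℝ) (hx : x ∈ Set.Ioo (0 : ℝ) 1)
    (p : ℕ) (hp : 0 < p) (d : ℕ → ℤ)
    (hgreedy : ∀ n, d n = ⌊β * (betaMap β)^[n] x⌋)
    (hdfin : ∀ n, p ≤ n → d n = 0) :
    ∃ (N : ℤ) (u : ℤ → ℤ),
      (∃ k : ℤ, ∀ i, i < k → u i = 0) ∧
      (∀ i : ℤ, N ≤ i → u i = periodDigit β ℓ (i - N).toNat) ∧
      HasSum (fun i : ℤ => (u i : ℂ) * α ^ i)
        (-(∑ i ∈ Finset.range p, (d i : ℂ) * α ^ (-(i + 1 : ℤ)))) ∧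
      (-(∑ i ∈ Finset.range p, (d i : ℂ) * α ^ (-(i + 1 : ℤ))) -
          α ^ N * ∑' n : ℕ, (periodDigit β ℓ n : ℂ) * α ^ n) ∈
        Subring.closure ({α, α⁻¹} : Set ℂ) := by
  obtain ⟨hβ1, hβint, hβconj⟩ := hβ
  have hβ0 : (0:ℝ) < β := lt_trans one_pos hβ1
  set t : ℕ → ℤ := renyi β with ht
  -- the iterates of the beta map at 1
  have hiter : ∀ m, (betaMap β)^[m] 1
      = β ^ m - ∑ n ∈ range m, (t n : ℝ) * β ^ (m - 1 - n) := by
    intro m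
    induction m with
    | zero => simp
    | succ m ih =>
      rw [Function.iterate_succ_apply']
      have h1 : betaMap β ((betaMap β)^[m] 1)
          = β * ((betaMap β)^[m] 1) - (t m : ℝ) := by
        have : Int.fract (β * (betaMap β)^[m] 1)
            = β * (betaMap β)^[m] 1 - (⌊β * (betaMap β)^[m] 1⌋ : ℝ) := rfl
        rw [betaMap, this]; rfl
      rw [h1, ih, Finset.sum_range_succ]
      have hterm : ∀ n ∈ range m, β * ((t n : ℝ) * β ^ (m - 1 - n))
          = (t n : ℝ) * β ^ (m + 1 - 1 - n) := by
        intro n hn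
        have hn' : n < m := mem_range.mp hn
        have he : m - 1 - n + 1 = m + 1 - 1 - n := by omega
        rw [← he, pow_succ]; ring
      rw [mul_sub, Finset.mul_sum, Finset.sum_congr rfl hterm]
      have : m + 1 - 1 - m = 0 := by omega
      rw [this, pow_zero, ← pow_succ']
      ring
  -- nonnegativity of iterates
  have hnonneg : ∀ n, 0 < n → 0 ≤ (betaMap β)^[n] 1 := by
    intro n hn
    obtain ⟨m, rfl⟩ := Nat.exists_eq_succ_of_ne_zero hn.ne'
    rw [Function.iterate_succ_apply', betaMap]
    exact Int.fract_nonneg _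
  -- the orbit of 1 dies at time ℓ
  have hgrow : ∀ j, (betaMap β)^[ℓ + j] 1 = β ^ j * (betaMap β)^[ℓ] 1 := by
    intro j
    induction j with
    | zero => simp
    | succ j ih =>
      have hfl : ⌊β * (betaMap β)^[ℓ + j] 1⌋ = 0 := hfin (ℓ + j) (by omega)
      have hmem := Int.floor_eq_zero_iff.mp hfl
      have : (betaMap β)^[ℓ + (j+1)] 1 = β * (betaMap β)^[ℓ + j] 1 := by
        have : ℓ + (j+1) = (ℓ + j) + 1 := by omega
        rw [this, Function.iterate_succ_apply', betaMap,
          Int.fract_eq_self.mpr ⟨hmem.1, hmem.2⟩]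
      rw [this, ih, pow_succ]; ring
  have hc0 : (betaMap β)^[ℓ] 1 = 0 := by
    by_contra h
    have hcpos : 0 < (betaMap β)^[ℓ] 1 := lt_of_le_of_ne (hnonneg ℓ hℓ) (Ne.symm h)
    obtain ⟨j, hj⟩ := pow_unbounded_of_one_lt (1 / (betaMap β)^[ℓ] 1) hβ1
    have h1 : β * (betaMap β)^[ℓ + j] 1 < 1 :=
      (Int.floor_eq_zero_iff.mp (hfin (ℓ + j) (by omega))).2
    rw [hgrow j] at h1
    have h2 : 1 < β ^ j * (betaMap β)^[ℓ] 1 := (div_lt_iff₀ hcpos).mp hj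
    nlinarith [pow_pos hβ0 j]
  have hreal : β ^ ℓ = ∑ n ∈ range ℓ, (t n : ℝ) * β ^ (ℓ - 1 - n) := by
    have := hiter ℓ
    rw [hc0] at this
    linarith
  -- transfer the polynomial relation to α
  have hα1 : ‖α‖ < 1 := hβconj α hroot hne
  set Q : ℤ[X] := X ^ ℓ - ∑ n ∈ range ℓ, C (t n) * X ^ (ℓ - 1 - n) with hQ
  have hQβ : aeval β Q = 0 := by
    simp only [hQ, map_sub, map_sum, map_pow, map_mul, aeval_X, aeval_C,
      algebraMap_int_eq, eq_intCast, map_intCast]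
    rw [sub_eq_zero]
    exact hreal
  obtain ⟨q, hq⟩ := minpoly.isIntegrallyClosed_dvd hβint hQβ
  have hQα : aeval α Q = 0 := by rw [hq, map_mul, hroot, zero_mul]
  have hrel : α ^ ℓ = ∑ n ∈ range ℓ, (t n : ℂ) * α ^ (ℓ - 1 - n) := by
    simp only [hQ, map_sub, map_sum, map_pow, map_mul, aeval_X, aeval_C,
      algebraMap_int_eq, eq_intCast, map_intCast] at hQα
    rw [sub_eq_zero] at hQα
    exact hQα
  have hα0 : α ≠ 0 := by
    rintro rfl
    rw [zero_pow hℓ.ne'] at hrel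
    rw [Finset.sum_eq_single (ℓ - 1)
      (by intro n hn hne'; rw [zero_pow (by have := mem_range.mp hn; omega), mul_zero])
      (by intro h; exact absurd (mem_range.mpr (by omega)) h)] at hrel
    have : ℓ - 1 - (ℓ - 1) = 0 := by omega
    rw [this, pow_zero, mul_one] at hrel
    exact hlast (by exact_mod_cast hrel.symm)
  -- 1 = ∑_{n<ℓ} t n · α^{-(n+1)}
  have hinv : ∑ n ∈ range ℓ, (t n : ℂ) * α ^ (-(n + 1 : ℤ)) = 1 := by
    have key : ∀ n ∈ range ℓ, (t n : ℂ) * α ^ (-(n + 1 : ℤ))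
        = ((t n : ℂ) * α ^ (ℓ - 1 - n)) * (α ^ ℓ)⁻¹ := by
      intro n hn
      have hn' : n < ℓ := mem_range.mp hn
      rw [mul_assoc]
      congr 1
      rw [← zpow_natCast α (ℓ - 1 - n), ← zpow_natCast α ℓ, ← zpow_neg,
        ← zpow_add₀ hα0]
      congr 1
      push_cast
      omega
    rw [Finset.sum_congr rfl key, ← Finset.sum_mul, ← hrel,
      mul_inv_cancel₀ (pow_ne_zero _ hα0)]
  -- the period sum over one period
  have hpd : ∀ j < ℓ, periodDigit β ℓ j = t (ℓ - 1 - j) - if j = 0 then 1 else 0 := by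
    intro j hj
    rw [periodDigit, Nat.mod_eq_of_lt hj]
  have hper : ∑ j ∈ range ℓ, (periodDigit β ℓ j : ℂ) * α ^ j = α ^ ℓ - 1 := by
    have e1 : ∀ j ∈ range ℓ, (periodDigit β ℓ j : ℂ) * α ^ j
        = (t (ℓ - 1 - j) : ℂ) * α ^ j - (if j = 0 then (1:ℂ) else 0) * α ^ j := by
      intro j hj
      rw [hpd j (mem_range.mp hj)]
      push_cast [apply_ite (Int.cast : ℤ → ℂ)]
      ring
    rw [Finset.sum_congr rfl e1, Finset.sum_sub_distrib]
    have e2 : ∑ j ∈ range ℓ, (if j = 0 then (1:ℂ) else 0) * α ^ j = 1 := by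
      rw [Finset.sum_eq_single 0 (by intro n _ hn; rw [if_neg hn, zero_mul])
        (by intro h; exact absurd (mem_range.mpr hℓ) h)]
      simp
    have e3 : ∑ j ∈ range ℓ, (t (ℓ - 1 - j) : ℂ) * α ^ j = α ^ ℓ := by
      have := Finset.sum_range_reflect (fun j => (t j : ℂ) * α ^ (ℓ - 1 - j)) ℓ
      rw [← hrel] at this
      rw [← this]
      apply Finset.sum_congr rfl
      intro j hj
      have hj' : j < ℓ := mem_range.mp hj
      have : ℓ - 1 - (ℓ - 1 - j) = j := by omega
      rw [this]
    rw [e2, e3]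
  -- summability of the periodic series
  have hpdmod : ∀ n, periodDigit β ℓ n = periodDigit β ℓ (n % ℓ) := by
    intro n
    rw [periodDigit, periodDigit, Nat.mod_mod_of_dvd n dvd_rfl]
  have hgsummable : Summable (fun n : ℕ => (periodDigit β ℓ n : ℂ) * α ^ n) := by
    set C : ℝ := ∑ j ∈ range ℓ, |((periodDigit β ℓ j : ℤ) : ℝ)| with hC
    apply Summable.of_norm_bounded (g := fun n => C * ‖α‖ ^ n)
      ((summable_geometric_of_lt_one (norm_nonneg α) hα1).mul_left C)
    intro n
    rw [norm_mul, norm_pow]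
    apply mul_le_mul_of_nonneg_right ?_ (pow_nonneg (norm_nonneg α) n)
    calc ‖((periodDigit β ℓ n : ℤ) : ℂ)‖ = |((periodDigit β ℓ n : ℤ) : ℝ)| := by
            rw [← Complex.ofReal_intCast, Complex.norm_real, Real.norm_eq_abs]
      _ = |((periodDigit β ℓ (n % ℓ) : ℤ) : ℝ)| := by rw [← hpdmod]
      _ ≤ C := by
            rw [hC]
            exact Finset.single_le_sum (f := fun j => |((periodDigit β ℓ j : ℤ) : ℝ)|)
              (fun j _ => abs_nonneg _) (mem_range.mpr (Nat.mod_lt n hℓ))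
  -- the α-value of the periodic word is -1
  have hT : ∑' n : ℕ, (periodDigit β ℓ n : ℂ) * α ^ n = -1 := by
    have h1 := hgsummable.sum_add_tsum_nat_add ℓ
    have h2 : ∑' n : ℕ, (periodDigit β ℓ (n + ℓ) : ℂ) * α ^ (n + ℓ)
        = α ^ ℓ * ∑' n : ℕ, (periodDigit β ℓ n : ℂ) * α ^ n := by
      rw [← tsum_mul_left]
      congr 1
      funext n
      have : periodDigit β ℓ (n + ℓ) = periodDigit β ℓ n := by
        rw [hpdmod (n + ℓ), Nat.add_mod_right, ← hpdmod]
      rw [this, pow_add]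
      ring
    rw [hper, h2] at h1
    have hαℓ : (1:ℂ) - α ^ ℓ ≠ 0 := by
      intro h
      rw [sub_eq_zero] at h
      have h3 : ‖α ^ ℓ‖ = 1 := by rw [← h]; simp
      rw [norm_pow] at h3
      have h4 : ‖α‖ ^ ℓ < 1 := pow_lt_one₀ (norm_nonneg α) hα1 hℓ.ne'
      linarith
    have h5 : (∑' n : ℕ, (periodDigit β ℓ n : ℂ) * α ^ n) * (1 - α ^ ℓ)
        = (-1) * (1 - α ^ ℓ) := by linear_combination -h1
    exact mul_right_cancel₀ hαℓ h5
  have hgsum : HasSum (fun n : ℕ => (periodDigit β ℓ n : ℂ) * α ^ n) (-1) :=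
    hT ▸ hgsummable.hasSum
  -- assemble
  set S : ℂ := ∑ i ∈ Finset.range p, (d i : ℂ) * α ^ (-(i + 1 : ℤ)) with hS
  set M : ℕ := max p ℓ with hM
  set c : ℕ → ℤ := fun m => (if m < ℓ then t m else 0) - (if m < p then d m else 0)
    with hc
  refine ⟨0, fun i => Int.rec (fun n => periodDigit β ℓ n) c i, ⟨-(M:ℤ), ?_⟩, ?_, ?_, ?_⟩
  · intro i hi
    cases i with
    | ofNat n => exfalso; have h0 : (0:ℤ) ≤ Int.ofNat n := Int.ofNat_nonneg n; omega
    | negSucc m =>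
      show c m = 0
      rw [Int.negSucc_eq] at hi
      have hm : M ≤ m := by omega
      rw [hc]
      simp only
      rw [if_neg (by omega), if_neg (by omega), sub_zero]
  · intro i hi
    obtain ⟨n, rfl⟩ := Int.eq_ofNat_of_zero_le hi
    have h1 : ((n:ℤ) - 0).toNat = n := by omega
    rw [h1]
    rfl
  · have hF : HasSum (fun n : ℕ => (periodDigit β ℓ n : ℂ) * α ^ ((n:ℤ))) (-1) := by
      simp_rw [zpow_natCast]
      exact hgsum
    have hG : HasSum (fun m : ℕ => (c m : ℂ) * α ^ (Int.negSucc m)) (1 - S) := by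
      have hvanish : ∀ m ∉ range M, (c m : ℂ) * α ^ (Int.negSucc m) = 0 := by
        intro m hm
        rw [mem_range, not_lt] at hm
        have : c m = 0 := by
          rw [hc]; simp only
          rw [if_neg (by omega), if_neg (by omega), sub_zero]
        rw [this, Int.cast_zero, zero_mul]
      have hsum : HasSum (fun m : ℕ => (c m : ℂ) * α ^ (Int.negSucc m))
          (∑ m ∈ range M, (c m : ℂ) * α ^ (Int.negSucc m)) := hasSum_sum_of_ne_finset_zero hvanish
      have hval : ∑ m ∈ range M, (c m : ℂ) * α ^ (Int.negSucc m) = 1 - S := by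
        have hterm : ∀ m, (c m : ℂ) * α ^ (Int.negSucc m)
            = (if m < ℓ then (t m : ℂ) * α ^ (-(m + 1 : ℤ)) else 0)
              - (if m < p then (d m : ℂ) * α ^ (-(m + 1 : ℤ)) else 0) := by
          intro m
          rw [Int.negSucc_eq, hc]
          simp only
          push_cast [apply_ite (Int.cast : ℤ → ℂ)]
          split_ifs <;> ring
        have hcut : ∀ (K : ℕ) (f : ℕ → ℂ), K ≤ M →
            ∑ m ∈ range M, (if m < K then f m else 0) = ∑ m ∈ range K, f m := by
          intro K f hK
          rw [← Finset.sum_subset (Finset.range_subset_range.mpr hK)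
            (fun m _ hm => by rw [if_neg (by simpa using hm)])]
          exact Finset.sum_congr rfl fun m hm => if_pos (mem_range.mp hm)
        simp_rw [hterm]
        rw [Finset.sum_sub_distrib, hcut ℓ _ (le_max_right _ _),
          hcut p _ (le_max_left _ _), hinv, hS]
      rw [← hval]
      exact hsum
    have heq : (fun i : ℤ => ((Int.rec (fun n => periodDigit β ℓ n) c i : ℤ) : ℂ) * α ^ i)
        = fun i : ℤ => Int.rec (fun n : ℕ => (periodDigit β ℓ n : ℂ) * α ^ ((n:ℤ)))
            (fun m : ℕ => (c m : ℂ) * α ^ (Int.negSucc m)) i := by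
      funext i
      cases i <;> rfl
    rw [heq]
    have := hF.int_rec hG
    convert this using 1
    rw [hS]
    ring
  · rw [hT, zpow_zero]
    have he : -S - 1 * (-1) = 1 - S := by ring
    rw [he]
    refine Subring.sub_mem _ (Subring.one_mem _) ?_
    rw [hS]
    refine Subring.sum_mem _ fun i _ => ?_
    refine Subring.mul_mem _ (intCast_mem _ _) ?_
    have h2 : α ^ (-(i + 1 : ℤ)) = (α⁻¹) ^ (i + 1) := by
      rw [← Nat.cast_add_one, zpow_neg, zpow_natCast, inv_pow]
    rw [h2]
    exact pow_mem (Subring.subset_closure (by simp)) _
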